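/- Suppose positive reals x, y, z with x ≠ 1 and z ≠ 1, positive reals s₀ < s₁ < s₂ < s₃, and positive reals t, t' satisfy the three equations x = ((s₁t' + 1)(s₀t + 1))/((s₀t' + 1)(s₁t + 1)), y = ((s₂t' + 1)(s₁t + 1))/((s₁t' + 1)(s₂t + 1)), z = ((s₃t' + 1)(s₂t + 1))/((s₂t' + 1)(s₃t + 1)). Then G(x,y,z) = 0 where G(x,y,z) = (xy²z + 1)(s₀-s₁)(s₂-s₃) + (xyz + y)(s₂-s₀)(s₁-s₃) + (yz + xy)(s₀-s₃)(s₁-s₂). -/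

import Mathlib

set_option maxHeartbeats 4000000 in
theorem stmt13 (s₀ s₁ s₂ s₃ t t' x y z : ℝ)
    (hs₀ : 0 < s₀) (h01 : s₀ < s₁) (h12 : s₁ < s₂) (h23 : s₂ < s₃)
    (ht : 0 < t) (ht' : 0 < t') (hx : 0 < x) (hy : 0 < y) (hz : 0 < z)
    (hx1 : x ≠ 1) (hz1 : z ≠ 1)
    (hxe : x = ((s₁ * t' + 1) * (s₀ * t + 1)) / ((s₀ * t' + 1) * (s₁ * t + 1)))
    (hye : y = ((s₂ * t' + 1) * (s₁ * t + 1)) / ((s₁ * t' + 1) * (s₂ * t + 1)))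
    (hze : z = ((s₃ * t' + 1) * (s₂ * t + 1)) / ((s₂ * t' + 1) * (s₃ * t + 1))) :
    (x * y ^ 2 * z + 1) * (s₀ - s₁) * (s₂ - s₃) +
      (x * y * z + y) * (s₂ - s₀) * (s₁ - s₃) +
      (y * z + x * y) * (s₀ - s₃) * (s₁ - s₂) = 0 := by
  have h0 : 0 < s₁ := hs₀.trans h01
  have h2 : 0 < s₂ := h0.trans h12
  have h3 : 0 < s₃ := h2.trans h23
  have d0 : (s₀ * t' + 1) ≠ 0 := by positivity
  have d1 : (s₁ * t + 1) ≠ 0 := by positivity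
  have d2 : (s₁ * t' + 1) ≠ 0 := by positivity
  have d3 : (s₂ * t + 1) ≠ 0 := by positivity
  have d4 : (s₂ * t' + 1) ≠ 0 := by positivity
  have d5 : (s₃ * t + 1) ≠ 0 := by positivity
  have d6 : (s₀ * t + 1) ≠ 0 := by positivity
  have d7 : (s₃ * t' + 1) ≠ 0 := by positivity
  have e1 : x * y ^ 2 * z =
      ((s₀ * t + 1) * (s₁ * t + 1) * (s₂ * t' + 1) * (s₃ * t' + 1)) /
      ((s₀ * t' + 1) * (s₁ * t' + 1) * (s₂ * t + 1) * (s₃ * t + 1)) := by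
    rw [hxe, hye, hze]; field_simp
  have e2 : x * y * z =
      ((s₀ * t + 1) * (s₃ * t' + 1)) / ((s₀ * t' + 1) * (s₃ * t + 1)) := by
    rw [hxe, hye, hze]; field_simp
  have e3 : y * z =
      ((s₁ * t + 1) * (s₃ * t' + 1)) / ((s₁ * t' + 1) * (s₃ * t + 1)) := by
    rw [hye, hze]; field_simp
  have e4 : x * y =
      ((s₀ * t + 1) * (s₂ * t' + 1)) / ((s₀ * t' + 1) * (s₂ * t + 1)) := by
    rw [hxe, hye]; field_simp
  rw [e1, e2, e3, e4, hye]
  field_simp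
  ring
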